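/- Let (U, V) have joint distribution G on ℝ^m × [0,1] with E‖U‖² < ∞, and let G̃ be another distribution of (U,V) with dG̃/dG = π̃ where π̃ ≥ η > 0. Denote μ_G(V) = E_G[U | V] and μ_{G̃}(V) = E_{G̃}[U | V], and set W_G = E_G[(U − μ_G(V))(U − μ_G(V))ᵀ], W_{G̃} = E_{G̃}[(U − μ_{G̃}(V))(U − μ_{G̃}(V))ᵀ]. Then for every a ∈ ℝ^m, aᵀ W_{G̃} a ≥ η aᵀ W_G a. In particular, if W_G is positive definite then W_{G̃} is positive definite. -/

import Mathlib

open MeasureTheory ENNReal Matrix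

section Aux

lemma mul_mem2_integrable {α : Type*} [MeasurableSpace α] {μ : Measure α} {f g : α → ℝ}
    (hf : MemLp f 2 μ) (hg : MemLp g 2 μ) : Integrable (fun x => f x * g x) μ := by
  have h := MemLp.smul (r := 1) hg hf (hpqr := ⟨by simp [one_div, ENNReal.inv_two_add_inv_two]⟩)
  rw [memLp_one_iff_integrable] at h
  exact h

lemma memLp_two_condexp {α : Type*} {m m0 : MeasurableSpace α} (hm : m ≤ m0)
    (μ : Measure α) [IsFiniteMeasure μ] {f : α → ℝ} (hf : MemLp f 2 μ) :
    MemLp (μ[f|m]) 2 μ := by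
  have hg := Lp.memLp ((condExpL2 ℝ ℝ hm (hf.toLp f) : lpMeas ℝ ℝ m 2 μ) : Lp ℝ 2 μ)
  refine hg.ae_eq ?_
  refine ae_eq_condExp_of_forall_setIntegral_eq hm (hf.integrable one_le_two)
    (fun s _ _ => (integrable_condExpL2_of_isFiniteMeasure hm).integrableOn)
    (fun s hs hμs => ?_)
    ((aestronglyMeasurable_condExpL2 hm _))
  rw [integral_condExpL2_eq hm (hf.toLp f) hs hμs.ne]
  exact setIntegral_congr_ae (hm s hs) ((hf.coeFn_toLp).mono fun x hx _ => hx)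

lemma lintegral_le_withDensity' {α : Type*} [MeasurableSpace α] (μ : Measure α)
    {π : α → ℝ≥0∞} (hπ : Measurable π) {c : ℝ≥0∞} (hc : ∀ x, c ≤ π x)
    {g : α → ℝ≥0∞} (hg : Measurable g) :
    c * ∫⁻ x, g x ∂μ ≤ ∫⁻ x, g x ∂(μ.withDensity π) := by
  rw [lintegral_withDensity_eq_lintegral_mul _ hπ hg, ← lintegral_const_mul c hg]
  exact lintegral_mono fun x => mul_le_mul_of_nonneg_right (hc x) (zero_le)

lemma integrable_of_withDensity' {α : Type*} [MeasurableSpace α] {μ : Measure α}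
    {π : α → ℝ≥0∞} (hπ : Measurable π) {η : ℝ} (hη : 0 < η)
    (hc : ∀ x, ENNReal.ofReal η ≤ π x) {f : α → ℝ} (hf : Measurable f)
    (hfi : Integrable f (μ.withDensity π)) : Integrable f μ := by
  refine ⟨hf.aestronglyMeasurable, ?_⟩
  have key := lintegral_le_withDensity' μ hπ hc (c := ENNReal.ofReal η)
    (g := fun x => ‖f x‖ₑ) hf.enorm
  have hlt : ENNReal.ofReal η * ∫⁻ x, ‖f x‖ₑ ∂μ < ∞ :=
    lt_of_le_of_lt key hfi.2
  simp only [HasFiniteIntegral]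
  by_contra h
  rw [not_lt, top_le_iff] at h
  rw [h, ENNReal.mul_top (ENNReal.ofReal_pos.mpr hη).ne'] at hlt
  exact (lt_irrefl _ hlt)

lemma integral_le_withDensity' {α : Type*} [MeasurableSpace α] {μ : Measure α}
    {π : α → ℝ≥0∞} (hπ : Measurable π) {η : ℝ} (hη : 0 < η)
    (hc : ∀ x, ENNReal.ofReal η ≤ π x) {g : α → ℝ} (hg : Measurable g)
    (hg0 : ∀ x, 0 ≤ g x) (hgi : Integrable g (μ.withDensity π)) :
    η * ∫ x, g x ∂μ ≤ ∫ x, g x ∂(μ.withDensity π) := by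
  have hgiμ : Integrable g μ := integrable_of_withDensity' hπ hη hc hg hgi
  rw [integral_eq_lintegral_of_nonneg_ae (ae_of_all _ hg0) hg.aestronglyMeasurable,
    integral_eq_lintegral_of_nonneg_ae (ae_of_all _ hg0) hg.aestronglyMeasurable]
  have key := lintegral_le_withDensity' μ hπ hc (c := ENNReal.ofReal η)
    (g := fun x => ENNReal.ofReal (g x)) (ENNReal.measurable_ofReal.comp hg)
  have hfin : ∫⁻ x, ENNReal.ofReal (g x) ∂(μ.withDensity π) < ∞ := by
    have := hgi.2
    simp only [HasFiniteIntegral] at this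
    refine lt_of_eq_of_lt ?_ this
    congr 1; ext x
    rw [← ofReal_norm_eq_enorm, Real.norm_eq_abs, abs_of_nonneg (hg0 x)]
  calc η * (∫⁻ x, ENNReal.ofReal (g x) ∂μ).toReal
      = (ENNReal.ofReal η * ∫⁻ x, ENNReal.ofReal (g x) ∂μ).toReal := by
        rw [ENNReal.toReal_mul, ENNReal.toReal_ofReal hη.le]
    _ ≤ (∫⁻ x, ENNReal.ofReal (g x) ∂(μ.withDensity π)).toReal :=
        ENNReal.toReal_mono hfin.ne key

lemma quad_form_integral {α : Type*} [MeasurableSpace α] (μ : Measure α) {n : ℕ}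
    (a : Fin n → ℝ) (d : α → Fin n → ℝ) (h2 : ∀ i, MemLp (fun x => d x i) 2 μ)
    (W : Matrix (Fin n) (Fin n) ℝ)
    (hW : ∀ i j, W i j = ∫ x, d x i * d x j ∂μ) :
    a ⬝ᵥ W.mulVec a = ∫ x, (∑ i, a i * d x i) ^ 2 ∂μ := by
  have hint : ∀ i j : Fin n,
      Integrable (fun x => (a i * d x i) * (a j * d x j)) μ :=
    fun i j => mul_mem2_integrable ((h2 i).const_mul _) ((h2 j).const_mul _)
  have hterm : ∀ i j : Fin n, a i * (W i j * a j) =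
      ∫ x, (a i * d x i) * (a j * d x j) ∂μ := by
    intro i j
    rw [hW i j, ← integral_mul_const, ← integral_const_mul]
    congr 1; funext x; ring
  calc a ⬝ᵥ W.mulVec a = ∑ i, ∑ j, a i * (W i j * a j) := by
        simp [dotProduct, mulVec, Finset.mul_sum]
    _ = ∑ i, ∑ j, ∫ x, (a i * d x i) * (a j * d x j) ∂μ := by
        simp_rw [hterm]
    _ = ∫ x, ∑ i, ∑ j, (a i * d x i) * (a j * d x j) ∂μ := by
        rw [integral_finset_sum _ (fun i _ => integrable_finset_sum _ (fun j _ => hint i j))]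
        exact Finset.sum_congr rfl fun i _ =>
          (integral_finset_sum _ (fun j _ => hint i j)).symm
    _ = ∫ x, (∑ i, a i * d x i) ^ 2 ∂μ := by
        congr 1; funext x
        rw [sq, Finset.sum_mul_sum]

lemma condexp_l2_min {α : Type*} {m m0 : MeasurableSpace α} (hm : m ≤ m0)
    (μ : Measure α) [IsFiniteMeasure μ] {F p q : α → ℝ}
    (hF : MemLp F 2 μ) (hp : MemLp p 2 μ) (hq : MemLp q 2 μ)
    (hpm : StronglyMeasurable[m] p) (hqm : StronglyMeasurable[m] q)
    (hpc : p =ᵐ[μ] μ[F|m]) :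
    ∫ x, (F x - p x) ^ 2 ∂μ ≤ ∫ x, (F x - q x) ^ 2 ∂μ := by
  set h : α → ℝ := p - q with hh_def
  have hhm : StronglyMeasurable[m] h := hpm.sub hqm
  have hh2 : MemLp h 2 μ := hp.sub hq
  have hF1 : Integrable F μ := hF.integrable one_le_two
  have hhF : Integrable (h * F) μ := by
    have := mul_mem2_integrable hh2 hF
    exact this
  have hhp : Integrable (fun x => h x * p x) μ := mul_mem2_integrable hh2 hp
  have hmul : μ[h * F|m] =ᵐ[μ] h * μ[F|m] :=
    condExp_mul_of_stronglyMeasurable_left hhm hhF hF1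
  have cross : ∫ x, (F x - p x) * h x ∂μ = 0 := by
    have heq : (fun x => (F x - p x) * h x)
        = fun x => h x * F x - h x * p x := funext fun x => by ring
    rw [heq, integral_sub (by exact hhF) hhp]
    have e1 : ∫ x, h x * F x ∂μ = ∫ x, (μ[h * F|m]) x ∂μ := by
      rw [integral_condExp hm]; rfl
    have e2 : ∫ x, (μ[h * F|m]) x ∂μ = ∫ x, h x * p x ∂μ := by
      refine integral_congr_ae (hmul.trans ?_)
      filter_upwards [hpc] with x hx
      simp [Pi.mul_apply, hx]
    rw [e1, e2, sub_self]
  have I1 : Integrable (fun x => (F x - p x) ^ 2) μ := by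
    have := mul_mem2_integrable (hF.sub hp) (hF.sub hp)
    simpa [sq] using this
  have I2 : Integrable (fun x => (F x - p x) * h x) μ :=
    mul_mem2_integrable (hF.sub hp) hh2
  have I3 : Integrable (fun x => h x ^ 2) μ := by
    have := mul_mem2_integrable hh2 hh2
    simpa [sq] using this
  have expand : (fun x => (F x - q x) ^ 2)
      = fun x => ((F x - p x) ^ 2 + 2 * ((F x - p x) * h x)) + h x ^ 2 := by
    funext x; simp only [hh_def, Pi.sub_apply]; ring
  have I2' : Integrable (fun x => 2 * ((F x - p x) * h x)) μ := I2.const_mul 2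
  have I12 : Integrable (fun x => (F x - p x) ^ 2 + 2 * ((F x - p x) * h x)) μ :=
    I1.add I2'
  rw [expand, integral_add I12 I3, integral_add I1 I2', integral_const_mul, cross]
  have : 0 ≤ ∫ x, h x ^ 2 ∂μ := integral_nonneg fun x => sq_nonneg _
  linarith

/-- The sub-σ-algebra generated by the second coordinate. -/
def sndSigma (m : ℕ) : MeasurableSpace ((Fin m → ℝ) × ℝ) :=
  MeasurableSpace.comap Prod.snd inferInstance

end Aux

/-- Remark 6a (second part) of Koul, Müller and Schick: if `dG̃/dG = π̃ ≥ η > 0`, then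
for the conditional-centering matrices `W_G = E_G[(U − μ_G(V))(U − μ_G(V))ᵀ]` and
`W_G̃ = E_G̃[(U − μ_G̃(V))(U − μ_G̃(V))ᵀ]` (with `μ_G(V) = E_G[U|V]`) one has
`aᵀ W_G̃ a ≥ η aᵀ W_G a` for every `a ∈ ℝ^m`; in particular `W_G` positive definite
implies `W_G̃` positive definite. -/
theorem conditional_centering_matrix_bound {m : ℕ}
    (G Gt : Measure ((Fin m → ℝ) × ℝ))
    [IsProbabilityMeasure G] [IsProbabilityMeasure Gt]
    (πt : (Fin m → ℝ) × ℝ → ℝ≥0∞) (hπt : Measurable πt)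
    (hGt : Gt = G.withDensity πt)
    (η : ℝ) (hη : 0 < η) (hlow : ∀ x, ENNReal.ofReal η ≤ πt x)
    -- square integrability of `U` under `G` (hence under `G̃`)
    (hU2 : Integrable (fun x : (Fin m → ℝ) × ℝ => ‖x.1‖ ^ 2) G)
    (hU2t : Integrable (fun x : (Fin m → ℝ) × ℝ => ‖x.1‖ ^ 2) Gt)
    -- `μ_G(V) = E_G[U | V]` and `μ_G̃(V) = E_G̃[U | V]`, componentwise
    (μG μGt : (Fin m → ℝ) × ℝ → Fin m → ℝ)
    (hμG : ∀ i, (fun x => μG x i) =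
      G[fun x : (Fin m → ℝ) × ℝ => x.1 i | MeasurableSpace.comap Prod.snd inferInstance])
    (hμGt : ∀ i, (fun x => μGt x i) =
      Gt[fun x : (Fin m → ℝ) × ℝ => x.1 i | MeasurableSpace.comap Prod.snd inferInstance])
    (WG WGt : Matrix (Fin m) (Fin m) ℝ)
    (hWG : ∀ i j, WG i j = ∫ x, (x.1 i - μG x i) * (x.1 j - μG x j) ∂G)
    (hWGt : ∀ i j, WGt i j = ∫ x, (x.1 i - μGt x i) * (x.1 j - μGt x j) ∂Gt) :
    (∀ a : Fin m → ℝ, η * (a ⬝ᵥ WG.mulVec a) ≤ a ⬝ᵥ WGt.mulVec a) ∧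
      (WG.PosDef → WGt.PosDef) := by
  classical
  have hμG : ∀ i, (fun x => μG x i) =
      G[fun x : (Fin m → ℝ) × ℝ => x.1 i | sndSigma m] := hμG
  have hμGt : ∀ i, (fun x => μGt x i) =
      Gt[fun x : (Fin m → ℝ) × ℝ => x.1 i | sndSigma m] := hμGt
  have hm : sndSigma m ≤ (inferInstance : MeasurableSpace ((Fin m → ℝ) × ℝ)) :=
    measurable_iff_comap_le.mp
      (measurable_snd : Measurable (Prod.snd : (Fin m → ℝ) × ℝ → ℝ))
  -- measurability of coordinates
  have hUmeas : ∀ i, Measurable (fun x : (Fin m → ℝ) × ℝ => x.1 i) :=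
    fun i => (measurable_pi_apply i).comp measurable_fst
  -- L² membership of the coordinates of U
  have hUi : ∀ i, MemLp (fun x : (Fin m → ℝ) × ℝ => x.1 i) 2 G := by
    intro i
    have hnorm : MemLp (fun x : (Fin m → ℝ) × ℝ => ‖x.1‖) 2 G :=
      (memLp_two_iff_integrable_sq measurable_fst.norm.aestronglyMeasurable).mpr hU2
    exact hnorm.of_le (hUmeas i).aestronglyMeasurable
      (ae_of_all _ fun x => by simpa using norm_le_pi_norm x.1 i)
  have hUit : ∀ i, MemLp (fun x : (Fin m → ℝ) × ℝ => x.1 i) 2 Gt := by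
    intro i
    have hnorm : MemLp (fun x : (Fin m → ℝ) × ℝ => ‖x.1‖) 2 Gt :=
      (memLp_two_iff_integrable_sq measurable_fst.norm.aestronglyMeasurable).mpr hU2t
    exact hnorm.of_le (hUmeas i).aestronglyMeasurable
      (ae_of_all _ fun x => by simpa using norm_le_pi_norm x.1 i)
  -- conditional expectations: strong measurability and L² membership
  have hμGm : ∀ i, StronglyMeasurable[sndSigma m] (fun x => μG x i) := by
    intro i; rw [hμG i]; exact stronglyMeasurable_condExp
  have hμGtm : ∀ i, StronglyMeasurable[sndSigma m] (fun x => μGt x i) := by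
    intro i; rw [hμGt i]; exact stronglyMeasurable_condExp
  have hμGtmeas : ∀ i, Measurable (fun x => μGt x i) :=
    fun i => ((hμGtm i).mono hm).measurable
  have hμG2 : ∀ i, MemLp (fun x => μG x i) 2 G := by
    intro i; rw [hμG i]; exact memLp_two_condexp hm G (hUi i)
  have hμGt2t : ∀ i, MemLp (fun x => μGt x i) 2 Gt := by
    intro i; rw [hμGt i]; exact memLp_two_condexp hm Gt (hUit i)
  -- transfer L²(G̃) to L²(G) via the density lower bound
  have hμGt2 : ∀ i, MemLp (fun x => μGt x i) 2 G := by
    intro i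
    have hsq : Integrable (fun x => (μGt x i) ^ 2) Gt :=
      (memLp_two_iff_integrable_sq ((hμGtm i).mono hm).aestronglyMeasurable).mp (hμGt2t i)
    rw [hGt] at hsq
    have hsqG : Integrable (fun x => (μGt x i) ^ 2) G :=
      integrable_of_withDensity' hπt hη hlow ((hμGtmeas i).pow_const 2) hsq
    exact (memLp_two_iff_integrable_sq ((hμGtm i).mono hm).aestronglyMeasurable).mpr hsqG
  -- the key quadratic-form inequality
  have key : ∀ a : Fin m → ℝ, η * (a ⬝ᵥ WG.mulVec a) ≤ a ⬝ᵥ WGt.mulVec a := by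
    intro a
    set F : (Fin m → ℝ) × ℝ → ℝ := fun x => ∑ i, a i * x.1 i with hF_def
    set p : (Fin m → ℝ) × ℝ → ℝ := fun x => ∑ i, a i * μG x i with hp_def
    set q : (Fin m → ℝ) × ℝ → ℝ := fun x => ∑ i, a i * μGt x i with hq_def
    have hF2G : MemLp F 2 G :=
      memLp_finset_sum Finset.univ (fun i _ => (hUi i).const_mul (a i))
    have hF2Gt : MemLp F 2 Gt :=
      memLp_finset_sum Finset.univ (fun i _ => (hUit i).const_mul (a i))
    have hp2G : MemLp p 2 G :=
      memLp_finset_sum Finset.univ (fun i _ => (hμG2 i).const_mul (a i))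
    have hq2G : MemLp q 2 G :=
      memLp_finset_sum Finset.univ (fun i _ => (hμGt2 i).const_mul (a i))
    have hq2Gt : MemLp q 2 Gt :=
      memLp_finset_sum Finset.univ (fun i _ => (hμGt2t i).const_mul (a i))
    have hpm : StronglyMeasurable[sndSigma m] p :=
      Finset.stronglyMeasurable_fun_sum _ (fun i _ => (hμGm i).const_mul (a i))
    have hqm : StronglyMeasurable[sndSigma m] q :=
      Finset.stronglyMeasurable_fun_sum _ (fun i _ => (hμGtm i).const_mul (a i))
    have hFmeas : Measurable F :=
      Finset.measurable_sum _ (fun i _ => (hUmeas i).const_mul (a i))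
    have hqmeas : Measurable q :=
      Finset.measurable_sum _ (fun i _ => (hμGtmeas i).const_mul (a i))
    -- p is a version of the G-conditional expectation of F
    have hpc : p =ᵐ[G] G[F|sndSigma m] := by
      set f : Fin m → (Fin m → ℝ) × ℝ → ℝ := fun i x => a i * x.1 i with hf_def
      have hFsum : F = ∑ i, f i := by
        funext x; simp [hF_def, hf_def, Finset.sum_apply]
      have hfint : ∀ i ∈ Finset.univ, Integrable (f i) G := fun i _ =>
        (((hUi i).const_mul (a i)).integrable one_le_two)
      have hsum := condExp_finset_sum (m := sndSigma m) hfint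
      have hci : ∀ i : Fin m, G[f i|sndSigma m] =ᵐ[G] fun x => a i * μG x i := by
        intro i
        have hfi : f i = a i • fun x : (Fin m → ℝ) × ℝ => x.1 i := by
          funext x; simp [hf_def, smul_eq_mul]
        rw [hfi]
        refine (condExp_smul (a i) _ _).trans ?_
        rw [← hμG i]
        rfl
      have hall : ∀ᵐ x ∂G, ∀ i : Fin m, (G[f i|sndSigma m]) x = a i * μG x i :=
        ae_all_iff.mpr fun i => hci i
      filter_upwards [hsum, hall] with x h1 h2
      rw [hp_def]
      rw [hFsum, h1, Finset.sum_apply]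
      exact (Finset.sum_congr rfl fun i _ => (h2 i)).symm
    -- quadratic form identities
    have eqG : a ⬝ᵥ WG.mulVec a = ∫ x, (F x - p x) ^ 2 ∂G := by
      rw [quad_form_integral G a (fun x i => x.1 i - μG x i)
        (fun i => (hUi i).sub (hμG2 i)) WG hWG]
      congr 1; funext x
      congr 1
      simp [hF_def, hp_def, mul_sub, Finset.sum_sub_distrib]
    have eqGt : a ⬝ᵥ WGt.mulVec a = ∫ x, (F x - q x) ^ 2 ∂Gt := by
      rw [quad_form_integral Gt a (fun x i => x.1 i - μGt x i)
        (fun i => (hUit i).sub (hμGt2t i)) WGt hWGt]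
      congr 1; funext x
      congr 1
      simp [hF_def, hq_def, mul_sub, Finset.sum_sub_distrib]
    -- minimization step under G
    have hmin : ∫ x, (F x - p x) ^ 2 ∂G ≤ ∫ x, (F x - q x) ^ 2 ∂G :=
      condexp_l2_min hm G hF2G hp2G hq2G hpm hqm hpc
    -- density step
    have hsqGt : Integrable (fun x => (F x - q x) ^ 2) Gt := by
      have := mul_mem2_integrable (hF2Gt.sub hq2Gt) (hF2Gt.sub hq2Gt)
      simpa [sq] using this
    have hdens : η * ∫ x, (F x - q x) ^ 2 ∂G ≤ ∫ x, (F x - q x) ^ 2 ∂Gt := by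
      rw [hGt]
      rw [hGt] at hsqGt
      exact integral_le_withDensity' hπt hη hlow ((hFmeas.sub hqmeas).pow_const 2)
        (fun x => sq_nonneg _) hsqGt
    calc η * (a ⬝ᵥ WG.mulVec a) = η * ∫ x, (F x - p x) ^ 2 ∂G := by rw [eqG]
      _ ≤ η * ∫ x, (F x - q x) ^ 2 ∂G := mul_le_mul_of_nonneg_left hmin hη.le
      _ ≤ ∫ x, (F x - q x) ^ 2 ∂Gt := hdens
      _ = a ⬝ᵥ WGt.mulVec a := eqGt.symm
  refine ⟨key, fun hPD => ?_⟩
  rw [posDef_iff_dotProduct_mulVec] at hPD ⊢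
  constructor
  · -- WGt is symmetric, hence Hermitian over ℝ
    ext i j
    simp only [conjTranspose_apply, star_trivial]
    rw [hWGt, hWGt]
    congr 1; funext x; ring
  · intro x hx
    have h1 : 0 < x ⬝ᵥ WG.mulVec x := by
      have := hPD.2 hx
      simpa using this
    have h2 := key x
    have h3 : 0 < η * (x ⬝ᵥ WG.mulVec x) := mul_pos hη h1
    simpa using lt_of_lt_of_le h3 h2
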